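/- Let A₂ = 0 and A₃ = 0, so that S₂ = C₁A₁⁻¹B₁ᵀ and S₃ = C₂S₂⁻¹B₂ᵀ, and assume A₁, S₂, S₃ are invertible. With block-diagonal preconditioner 𝒫_D = diag(A₁, S₂, S₃) applied to 𝒜 = [[A₁, B₁ᵀ, 0],[C₁, 0, B₂ᵀ],[0, C₂, 0]], the matrix 𝒯 = 𝒫_D⁻¹𝒜 satisfies the polynomial identity (𝒯 - I)(𝒯² - 𝒯 - I)(𝒯³ - 𝒯² - 2𝒯 + I) = 0. -/

import Mathlib

open Matrix

section helpers
variable {R : Type*} [Ring R] {m m₁ m₂ n n₁ n₂ : Type*}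

lemma fromRows_add' (A₁ B₁ : Matrix m₁ n R) (A₂ B₂ : Matrix m₂ n R) :
    fromRows A₁ A₂ + fromRows B₁ B₂ = fromRows (A₁ + B₁) (A₂ + B₂) := by
  ext (_ | _) _ <;> simp [fromRows_apply_inl, fromRows_apply_inr]

lemma fromColumns_add' (A₁ B₁ : Matrix m n₁ R) (A₂ B₂ : Matrix m n₂ R) :
    fromCols A₁ A₂ + fromCols B₁ B₂ = fromCols (A₁ + B₁) (A₂ + B₂) := by
  ext _ (_ | _) <;> simp [fromCols_apply_inl, fromCols_apply_inr]

lemma fromColumns_zero_fromRows (B₁₂ : Matrix m₁ n₂ R) (B₂₂ : Matrix m₂ n₂ R) :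
    fromCols (0 : Matrix (m₁ ⊕ m₂) n₁ R) (fromRows B₁₂ B₂₂) = fromBlocks 0 B₁₂ 0 B₂₂ := by
  rw [← fromRows_zero, fromCols_fromRows_eq_fromBlocks]

lemma fromColumns_fromRows_zero (B₁₁ : Matrix m₁ n₁ R) (B₂₁ : Matrix m₂ n₁ R) :
    fromCols (fromRows B₁₁ B₂₁) (0 : Matrix (m₁ ⊕ m₂) n₂ R) = fromBlocks B₁₁ 0 B₂₁ 0 := by
  rw [← fromRows_zero, fromCols_fromRows_eq_fromBlocks]

lemma fromRows_zero_fromColumns (B₂₁ : Matrix m₂ n₁ R) (B₂₂ : Matrix m₂ n₂ R) :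
    fromRows (0 : Matrix m₁ (n₁ ⊕ n₂) R) (fromCols B₂₁ B₂₂) = fromBlocks 0 0 B₂₁ B₂₂ := by
  rw [← fromCols_zero, fromRows_fromCols_eq_fromBlocks]

lemma fromRows_fromColumns_zero (B₁₁ : Matrix m₁ n₁ R) (B₁₂ : Matrix m₁ n₂ R) :
    fromRows (fromCols B₁₁ B₁₂) (0 : Matrix m₂ (n₁ ⊕ n₂) R) = fromBlocks B₁₁ B₁₂ 0 0 := by
  rw [← fromCols_zero, fromRows_fromCols_eq_fromBlocks]
end helpers

theorem key {n₁ n₂ n₃ : ℕ}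
    (X : Matrix (Fin n₁) (Fin n₂) ℝ) (Y : Matrix (Fin n₂) (Fin n₁) ℝ)
    (Z : Matrix (Fin n₂) (Fin n₃) ℝ) (W : Matrix (Fin n₃) (Fin n₂) ℝ)
    (hYX : Y * X = 1) (hWZ : W * Z = 1)
    (T : Matrix ((Fin n₁ ⊕ Fin n₂) ⊕ Fin n₃) ((Fin n₁ ⊕ Fin n₂) ⊕ Fin n₃) ℝ)
    (hT : T = fromBlocks (fromBlocks 1 X Y 0) (fromRows 0 Z) (fromCols 0 W) 0) :
    (T - 1) * (T ^ 2 - T - 1) * (T ^ 3 - T ^ 2 - 2 • T + 1) = 0 := by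
  have hYXM : ∀ {k : ℕ} (M : Matrix (Fin n₂) (Fin k) ℝ), Y * (X * M) = M := by
    intro k M; rw [← Matrix.mul_assoc, hYX, Matrix.one_mul]
  have hWZM : ∀ {k : ℕ} (M : Matrix (Fin n₃) (Fin k) ℝ), W * (Z * M) = M := by
    intro k M; rw [← Matrix.mul_assoc, hWZ, Matrix.one_mul]
  have h1 : (1 : Matrix ((Fin n₁ ⊕ Fin n₂) ⊕ Fin n₃) ((Fin n₁ ⊕ Fin n₂) ⊕ Fin n₃) ℝ)
      = fromBlocks (fromBlocks 1 0 0 1) (fromRows 0 0) (fromCols 0 0) 1 := by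
    simp [fromBlocks_one]
  have h0 : (0 : Matrix ((Fin n₁ ⊕ Fin n₂) ⊕ Fin n₃) ((Fin n₁ ⊕ Fin n₂) ⊕ Fin n₃) ℝ)
      = fromBlocks (fromBlocks 0 0 0 0) (fromRows 0 0) (fromCols 0 0) 0 := by
    simp [fromBlocks_zero]
  rw [pow_two] at *
  rw [show T ^ 3 = T * T * T from by rw [pow_succ, pow_two], two_smul]
  conv_rhs => rw [h0]
  rw [hT, h1]
  simp [fromBlocks_multiply, fromBlocks_mul_fromRows, fromCols_mul_fromBlocks,
    fromRows_mul_fromCols, fromCols_mul_fromRows, fromRows_mul, mul_fromCols,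
    fromRows_add', fromColumns_add', fromColumns_zero_fromRows, fromColumns_fromRows_zero,
    fromRows_zero_fromColumns, fromRows_fromColumns_zero, fromBlocks_add, fromBlocks_neg,
    fromRows_neg, fromCols_neg, sub_eq_add_neg, mul_assoc,
    hYX, hWZ, hYXM, hWZM, mul_add, add_mul, neg_add, mul_neg, neg_mul]
  rw [h1]
  conv_rhs => rw [h0]
  simp only [fromBlocks_add, fromRows_add', fromColumns_add', fromBlocks_inj,
    fromRows_ext_iff, fromCols_ext_iff]
  repeat' apply And.intro
  all_goals
    simp only [Matrix.mul_add, Matrix.add_mul, neg_add, Matrix.mul_neg, Matrix.neg_mul,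
      Matrix.mul_one, Matrix.one_mul, neg_neg, Matrix.mul_assoc, hYXM, hWZM, hYX, hWZ,
      Matrix.mul_smul, Matrix.smul_mul, smul_add, smul_neg, neg_smul, smul_smul, one_smul]
  all_goals try abel

theorem stmt_4 {n₁ n₂ n₃ : ℕ}
    (A₁ : Matrix (Fin n₁) (Fin n₁) ℝ)
    (B₁ C₁ : Matrix (Fin n₂) (Fin n₁) ℝ) (B₂ C₂ : Matrix (Fin n₃) (Fin n₂) ℝ)
    (hA₁ : IsUnit A₁)
    (S₂ : Matrix (Fin n₂) (Fin n₂) ℝ) (hS₂def : S₂ = C₁ * A₁⁻¹ * B₁ᵀ)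
    (hS₂ : IsUnit S₂)
    (S₃ : Matrix (Fin n₃) (Fin n₃) ℝ) (hS₃def : S₃ = C₂ * S₂⁻¹ * B₂ᵀ)
    (hS₃ : IsUnit S₃)
    (𝒜 : Matrix ((Fin n₁ ⊕ Fin n₂) ⊕ Fin n₃) ((Fin n₁ ⊕ Fin n₂) ⊕ Fin n₃) ℝ)
    (h𝒜 : 𝒜 = fromBlocks (fromBlocks A₁ B₁ᵀ C₁ 0) (fromRows 0 B₂ᵀ)
      (fromCols 0 C₂) 0)
    (T : Matrix ((Fin n₁ ⊕ Fin n₂) ⊕ Fin n₃) ((Fin n₁ ⊕ Fin n₂) ⊕ Fin n₃) ℝ)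
    (hT : T = (fromBlocks (fromBlocks A₁ 0 0 S₂) 0 0 S₃)⁻¹ * 𝒜) :
    (T - 1) * (T ^ 2 - T - 1) * (T ^ 3 - T ^ 2 - 2 • T + 1) = 0 := by
  have hA₁d : IsUnit A₁.det := (Matrix.isUnit_iff_isUnit_det A₁).mp hA₁
  have hS₂d : IsUnit S₂.det := (Matrix.isUnit_iff_isUnit_det S₂).mp hS₂
  have hS₃d : IsUnit S₃.det := (Matrix.isUnit_iff_isUnit_det S₃).mp hS₃
  have hDinv : (fromBlocks (fromBlocks A₁ 0 0 S₂) 0 0 S₃)⁻¹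
      = fromBlocks (fromBlocks A₁⁻¹ 0 0 S₂⁻¹) 0 0 S₃⁻¹ := by
    apply Matrix.inv_eq_right_inv
    simp [fromBlocks_multiply, Matrix.mul_nonsing_inv _ hA₁d, Matrix.mul_nonsing_inv _ hS₂d,
      Matrix.mul_nonsing_inv _ hS₃d, fromBlocks_one]
  have hTexp : T = fromBlocks (fromBlocks 1 (A₁⁻¹ * B₁ᵀ) (S₂⁻¹ * C₁) 0)
      (fromRows 0 (S₂⁻¹ * B₂ᵀ)) (fromCols 0 (S₃⁻¹ * C₂)) 0 := by
    rw [hT, hDinv, h𝒜]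
    simp [fromBlocks_multiply, fromBlocks_mul_fromRows, mul_fromCols,
      Matrix.nonsing_inv_mul _ hA₁d]
  have hYX : (S₂⁻¹ * C₁) * (A₁⁻¹ * B₁ᵀ) = 1 := by
    rw [Matrix.mul_assoc, ← Matrix.mul_assoc C₁ A₁⁻¹ B₁ᵀ, ← hS₂def,
      Matrix.nonsing_inv_mul _ hS₂d]
  have hWZ : (S₃⁻¹ * C₂) * (S₂⁻¹ * B₂ᵀ) = 1 := by
    rw [Matrix.mul_assoc, ← Matrix.mul_assoc C₂ S₂⁻¹ B₂ᵀ, ← hS₃def,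
      Matrix.nonsing_inv_mul _ hS₃d]
  exact key _ _ _ _ hYX hWZ T hTexp
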